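/- Let d ≥ 1 and let n be divisible by d+1. For every d-regular finite simple graph G on n vertices: (i) for every integer k with 1 ≤ k ≤ n/(d+1), one has i_{k+1}(G)·i_k(CL_{d,n}) ≥ i_{k+1}(CL_{d,n})·i_k(G) (i.e. the expected free volume (k+1)·i_{k+1}/i_k is minimized by CL_{d,n}); and (ii) for every integer k ≥ 0, i_k(G) ≥ i_k(CL_{d,n}). -/

import Mathlib

open Finset
open scoped Classical

variable {V : Type} [Fintype V] [DecidableEq V]

/-- `M` is a matching of `G`: a finite set of edges of `G` that are pairwise vertex-disjoint. -/
def IsMatchingFinset (G : SimpleGraph V) (M : Finset (Sym2 V)) : Prop :=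
  (∀ e ∈ M, e ∈ G.edgeSet) ∧
    ∀ e ∈ M, ∀ f ∈ M, e ≠ f → ∀ v : V, v ∈ e → v ∉ f

/-- `I` is an independent set of `G`: a finite set of pairwise non-adjacent vertices. -/
def IsIndepFinset (G : SimpleGraph V) (I : Finset V) : Prop :=
  ∀ u ∈ I, ∀ v ∈ I, ¬ G.Adj u v

/-- `G` is `d`-regular: every vertex has exactly `d` neighbors. -/
def IsRegularGraph (G : SimpleGraph V) (d : ℕ) : Prop :=
  ∀ v : V, (Finset.univ.filter fun w => G.Adj v w).card = d

/-- The matching polynomial (monomer-dimer partition function) of `G` at fugacity `lam`. -/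
noncomputable def Zmatch (G : SimpleGraph V) (lam : ℝ) : ℝ :=
  ∑ M ∈ Finset.univ.filter (fun M : Finset (Sym2 V) => IsMatchingFinset G M), lam ^ M.card

/-- The independence polynomial (hard-core partition function) of `G` at fugacity `lam`. -/
noncomputable def Zind (G : SimpleGraph V) (lam : ℝ) : ℝ :=
  ∑ I ∈ Finset.univ.filter (fun I : Finset V => IsIndepFinset G I), lam ^ I.card

/-- `m_k(G)`: the number of matchings of size `k` in `G`. -/
noncomputable def matchCount (G : SimpleGraph V) (k : ℕ) : ℕ :=
  (Finset.univ.filter fun M : Finset (Sym2 V) => IsMatchingFinset G M ∧ M.card = k).card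

/-- `i_k(G)`: the number of independent sets of size `k` in `G`. -/
noncomputable def indepCount (G : SimpleGraph V) (k : ℕ) : ℕ :=
  (Finset.univ.filter fun I : Finset V => IsIndepFinset G I ∧ I.card = k).card

/-- The number of monochromatic edges of `G` under the coloring `χ`. -/
noncomputable def monoCount (G : SimpleGraph V) {q : ℕ} (χ : V → Fin q) : ℕ :=
  (Finset.univ.filter fun e : Sym2 V =>
    e ∈ G.edgeSet ∧ ∀ v ∈ e, ∀ w ∈ e, χ v = χ w).card

/-- `c^q_k(G)`: the number of `q`-colorings of `G` with exactly `k` monochromatic edges. -/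
noncomputable def colCount (G : SimpleGraph V) (q k : ℕ) : ℕ :=
  (Finset.univ.filter fun χ : V → Fin q => monoCount G χ = k).card

/-- The disjoint union of `m` copies of the graph `H`. -/
def copies (m : ℕ) {W : Type} (H : SimpleGraph W) : SimpleGraph (Fin m × W) where
  Adj a b := a.1 = b.1 ∧ H.Adj a.2 b.2
  symm := ⟨fun a b h => ⟨h.1.symm, h.2.symm⟩⟩
  loopless := ⟨fun a h => H.irrefl h.2⟩

/-- `H_{d,n}` for `n = 2dm`: the disjoint union of `m` copies of `K_{d,d}`. -/
def Hgraph (d m : ℕ) : SimpleGraph (Fin m × (Fin d ⊕ Fin d)) :=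
  copies m (completeBipartiteGraph (Fin d) (Fin d))

/-- `CL_{d,n}` for `n = (d+1)m`: the disjoint union of `m` copies of the complete graph
`K_{d+1}`. -/
def CLgraph (d m : ℕ) : SimpleGraph (Fin m × Fin (d + 1)) :=
  copies m (⊤ : SimpleGraph (Fin (d + 1)))

-- AUX START
noncomputable def Aset (G : SimpleGraph V) (k : ℕ) : Finset (Finset V) :=
  Finset.univ.filter fun I => IsIndepFinset G I ∧ I.card = k

noncomputable def freeSet (G : SimpleGraph V) (I : Finset V) : Finset V :=
  Finset.univ.filter fun v => v ∉ I ∧ ∀ u ∈ I, ¬ G.Adj u v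

noncomputable def Tset (G : SimpleGraph V) (k : ℕ) : Finset (Finset V × V) :=
  Finset.univ.filter fun p => (IsIndepFinset G p.1 ∧ p.1.card = k) ∧ p.2 ∈ freeSet G p.1

lemma indepCount_eq_Aset (G : SimpleGraph V) (k : ℕ) :
    indepCount G k = (Aset G k).card := rfl

lemma Tset_card_eq_sum (G : SimpleGraph V) (k : ℕ) :
    (Tset G k).card = ∑ I ∈ Aset G k, (freeSet G I).card := by
  rw [Finset.card_eq_sum_card_fiberwise (f := Prod.fst) (t := Aset G k)
    (fun p hp => by simp only [Tset, Finset.mem_coe, Finset.mem_filter] at hp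
                    simp [Aset, hp.2.1])]
  refine Finset.sum_congr rfl fun I hI => ?_
  simp only [Aset, Finset.mem_filter] at hI
  refine Finset.card_bij (fun p _ => p.2) ?_ ?_ ?_
  · rintro p hp
    simp only [Finset.mem_filter, Tset] at hp
    show p.2 ∈ freeSet G I
    exact hp.2 ▸ hp.1.2.2
  · rintro p hp q hq h
    simp only [Finset.mem_filter, Tset] at hp hq
    have h' : p.2 = q.2 := h
    exact Prod.ext (hp.2.trans hq.2.symm) h' 
  · intro v hv
    exact ⟨(I, v), by simp [Tset, hI.2.1, hI.2.2, hv], rfl⟩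

lemma Tset_card_eq (G : SimpleGraph V) (k : ℕ) :
    (Tset G k).card = (k + 1) * indepCount G (k + 1) := by
  rw [indepCount_eq_Aset]
  rw [Finset.card_eq_sum_card_fiberwise (f := fun p => insert p.2 p.1) (t := Aset G (k + 1)) ?hf]
  case hf =>
    rintro p hp
    simp only [Tset, freeSet, Finset.mem_coe, Finset.mem_filter, Finset.mem_univ, true_and] at hp
    obtain ⟨⟨hind, hcard⟩, hnm, hna⟩ := hp
    simp only [Aset, Finset.mem_coe, Finset.mem_filter, Finset.mem_univ, true_and]
    constructor
    · intro u hu v hv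
      rcases Finset.mem_insert.1 hu with rfl | hu
      · rcases Finset.mem_insert.1 hv with rfl | hv
        · exact G.irrefl
        · exact fun h => hna v hv (G.symm.symm _ _ h)
      · rcases Finset.mem_insert.1 hv with rfl | hv
        · exact hna u hu
        · exact hind u hu v hv
    · rw [Finset.card_insert_of_notMem hnm, hcard]
  rw [Finset.sum_congr rfl (g := fun _ => k + 1) ?hg, Finset.sum_const, smul_eq_mul, mul_comm]
  case hg =>
    intro J hJ
    simp only [Aset, Finset.mem_filter, Finset.mem_univ, true_and] at hJ
    rw [← hJ.2]
    refine Finset.card_bij (fun p _ => p.2) ?_ ?_ ?_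
    · rintro p hp
      simp only [Finset.mem_filter] at hp
      show p.2 ∈ J
      exact hp.2 ▸ Finset.mem_insert_self _ _
    · rintro p hp q hq h
      simp only [Finset.mem_filter, Tset, freeSet, Finset.mem_univ, true_and] at hp hq
      have h' : p.2 = q.2 := h
      have e := hp.2.trans hq.2.symm
      have h1 : p.1 = q.1 := by
        calc p.1 = (insert p.2 p.1).erase p.2 := (Finset.erase_insert hp.1.2.1).symm
          _ = (insert q.2 q.1).erase q.2 := by rw [e, h']
          _ = q.1 := Finset.erase_insert hq.1.2.1
      exact Prod.ext h1 h' 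
    · intro v hv
      refine ⟨(J.erase v, v), ?_, rfl⟩
      simp only [Finset.mem_filter, Tset, freeSet, Finset.mem_univ, true_and]
      refine ⟨⟨⟨fun u hu w hw => hJ.1 u (Finset.mem_of_mem_erase hu) w (Finset.mem_of_mem_erase hw),
        by simp [Finset.card_erase_of_mem hv, hJ.2]⟩,
        Finset.notMem_erase v J, fun u hu => hJ.1 u (Finset.mem_of_mem_erase hu) v hv⟩,
        Finset.insert_erase hv⟩

lemma free_card_ge {d : ℕ} (G : SimpleGraph V) (hreg : IsRegularGraph G d) {k : ℕ}
    {I : Finset V} (hI : I.card = k) :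
    Fintype.card V - k * (d + 1) ≤ (freeSet G I).card := by
  classical
  set F : Finset V := I ∪ I.biUnion (fun u => Finset.univ.filter fun w => G.Adj u w) with hF
  have hfree : freeSet G I = Fᶜ := by
    ext v
    simp only [freeSet, Finset.mem_filter, Finset.mem_univ, true_and, hF, Finset.mem_compl,
      Finset.mem_union, Finset.mem_biUnion]
    constructor
    · rintro ⟨h1, h2⟩
      push_neg
      exact ⟨h1, fun u hu => by simpa using h2 u hu⟩
    · intro h
      push_neg at h
      exact ⟨h.1, fun u hu => by simpa using h.2 u hu⟩
  have hFcard : F.card ≤ k * (d + 1) := by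
    calc F.card ≤ I.card + (I.biUnion fun u => Finset.univ.filter fun w => G.Adj u w).card :=
          Finset.card_union_le _ _
    _ ≤ I.card + ∑ u ∈ I, (Finset.univ.filter fun w => G.Adj u w).card :=
          Nat.add_le_add_left (Finset.card_biUnion_le) _
    _ = k + ∑ u ∈ I, d := by rw [hI]; congr 1; exact Finset.sum_congr rfl fun u _ => hreg u
    _ = k + k * d := by rw [Finset.sum_const, hI, smul_eq_mul]
    _ = k * (d + 1) := by ring
  rw [hfree, Finset.card_compl]
  exact Nat.sub_le_sub_left hFcard _

lemma CL_adj {d m : ℕ} {u v : Fin m × Fin (d + 1)} :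
    (CLgraph d m).Adj u v ↔ u.1 = v.1 ∧ u.2 ≠ v.2 := Iff.rfl

lemma free_card_CL {d m : ℕ} {I : Finset (Fin m × Fin (d + 1))}
    (hind : IsIndepFinset (CLgraph d m) I) :
    (freeSet (CLgraph d m) I).card = m * (d + 1) - I.card * (d + 1) := by
  classical
  have hfstinj : ∀ u ∈ I, ∀ v ∈ I, u.1 = v.1 → u = v := by
    intro u hu v hv h
    by_contra hne
    exact hind u hu v hv ⟨h, fun h2 => hne (Prod.ext h h2)⟩
  set F : Finset (Fin m × Fin (d + 1)) :=
    I.biUnion (fun u => Finset.univ.filter fun v => v.1 = u.1) with hF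
  have hfree : freeSet (CLgraph d m) I = Fᶜ := by
    ext v
    simp only [freeSet, Finset.mem_filter, Finset.mem_univ, true_and, hF, Finset.mem_compl,
      Finset.mem_biUnion, not_exists]
    constructor
    · rintro ⟨h1, h2⟩ u ⟨hu, hfv⟩
      rcases eq_or_ne u.2 v.2 with h3 | h3
      · exact h1 (by rwa [show u = v from Prod.ext hfv.symm h3] at hu)
      · exact h2 u hu ⟨hfv.symm, h3⟩
    · intro h
      exact ⟨fun hv => h v ⟨hv, rfl⟩, fun u hu hadj => h u ⟨hu, hadj.1.symm⟩⟩
  have hFcard : F.card = I.card * (d + 1) := by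
    rw [hF, Finset.card_biUnion]
    · rw [Finset.sum_congr rfl (g := fun _ => d + 1) ?_, Finset.sum_const, smul_eq_mul]
      intro u _
      have : (Finset.univ.filter fun v : Fin m × Fin (d + 1) => v.1 = u.1) =
          Finset.univ.image (fun a : Fin (d + 1) => (u.1, a)) := by
        ext v
        simp only [Finset.mem_filter, Finset.mem_univ, true_and, Finset.mem_image]
        constructor
        · intro h; exact ⟨v.2, Prod.ext h.symm rfl⟩
        · rintro ⟨a, rfl⟩; rfl
      rw [this, Finset.card_image_of_injective _ (fun a b hab => congrArg Prod.snd hab),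
        Finset.card_univ, Fintype.card_fin]
    · intro u hu v hv hne
      refine Finset.disjoint_left.2 fun w hw1 hw2 => ?_
      simp only [Finset.mem_filter, Finset.mem_univ, true_and] at hw1 hw2
      exact hne (hfstinj u hu v hv (hw1 ▸ hw2 ▸ rfl))
  rw [hfree, Finset.card_compl, hFcard]
  congr 1
  simp [Fintype.card_prod]

lemma key_ineq {d : ℕ} (G : SimpleGraph V) (hreg : IsRegularGraph G d) (k : ℕ) :
    (Fintype.card V - k * (d + 1)) * indepCount G k ≤ (k + 1) * indepCount G (k + 1) := by
  rw [← Tset_card_eq, Tset_card_eq_sum, indepCount_eq_Aset, mul_comm,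
    ← smul_eq_mul, ← Finset.sum_const]
  refine Finset.sum_le_sum fun I hI => ?_
  simp only [Aset, Finset.mem_filter] at hI
  exact free_card_ge G hreg hI.2.2

lemma CL_recur (d m k : ℕ) :
    (k + 1) * indepCount (CLgraph d m) (k + 1) =
      (m * (d + 1) - k * (d + 1)) * indepCount (CLgraph d m) k := by
  rw [← Tset_card_eq, Tset_card_eq_sum, indepCount_eq_Aset, mul_comm,
    ← smul_eq_mul, ← Finset.sum_const]
  refine Finset.sum_congr rfl fun I hI => ?_
  simp only [Aset, Finset.mem_filter] at hI
  rw [free_card_CL hI.2.1, hI.2.2]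

lemma indepCount_zero (G : SimpleGraph V) : indepCount G 0 = 1 := by
  unfold indepCount
  have : (Finset.univ.filter fun I : Finset V => IsIndepFinset G I ∧ I.card = 0) = {∅} := by
    ext I
    simp only [Finset.mem_filter, Finset.mem_univ, true_and, Finset.mem_singleton,
      Finset.card_eq_zero]
    constructor
    · exact fun h => h.2
    · rintro rfl
      exact ⟨fun u hu => absurd hu (Finset.notMem_empty u), rfl⟩
  rw [this, Finset.card_singleton]

/-- Cutler–Radcliffe: for `d ≥ 1`, `(d+1) ∣ n` and any `d`-regular graph
`G` on `n` vertices: (i) for `1 ≤ k ≤ n/(d+1)`,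
`i_{k+1}(G)·i_k(CL_{d,n}) ≥ i_{k+1}(CL_{d,n})·i_k(G)`, and (ii) `i_k(G) ≥ i_k(CL_{d,n})`
for every `k ≥ 0`. -/
theorem cutler_radcliffe (d : ℕ) (hd : 1 ≤ d) (n : ℕ) (hdvd : (d + 1) ∣ n)
    {V : Type} [Fintype V] [DecidableEq V] (G : SimpleGraph V)
    (hcard : Fintype.card V = n) (hreg : IsRegularGraph G d) :
    (∀ k : ℕ, 1 ≤ k → k ≤ n / (d + 1) →
        indepCount (CLgraph d (n / (d + 1))) (k + 1) * indepCount G k ≤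
          indepCount G (k + 1) * indepCount (CLgraph d (n / (d + 1))) k) ∧
      ∀ k : ℕ, indepCount (CLgraph d (n / (d + 1))) k ≤ indepCount G k := by
  obtain ⟨m, hm⟩ := hdvd
  have hmn : n / (d + 1) = m := by rw [hm]; exact Nat.mul_div_cancel_left m (Nat.succ_pos d)
  have hn : m * (d + 1) = n := by rw [hm]; ring
  have hCL : ∀ k, (k + 1) * indepCount (CLgraph d m) (k + 1) =
      (n - k * (d + 1)) * indepCount (CLgraph d m) k := by
    intro k; rw [← hn]; exact CL_recur d m k
  have hG : ∀ k, (n - k * (d + 1)) * indepCount G k ≤ (k + 1) * indepCount G (k + 1) := by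
    intro k; rw [← hcard]; exact key_ineq G hreg k
  rw [hmn]
  constructor
  · intro k _ _
    refine Nat.le_of_mul_le_mul_left ?_ k.succ_pos
    calc (k + 1) * (indepCount (CLgraph d m) (k + 1) * indepCount G k)
        = ((k + 1) * indepCount (CLgraph d m) (k + 1)) * indepCount G k := by ring
      _ = (n - k * (d + 1)) * indepCount (CLgraph d m) k * indepCount G k := by rw [hCL k]
      _ = indepCount (CLgraph d m) k * ((n - k * (d + 1)) * indepCount G k) := by ring
      _ ≤ indepCount (CLgraph d m) k * ((k + 1) * indepCount G (k + 1)) :=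
          Nat.mul_le_mul_left _ (hG k)
      _ = (k + 1) * (indepCount G (k + 1) * indepCount (CLgraph d m) k) := by ring
  · intro k
    induction k with
    | zero => rw [indepCount_zero, indepCount_zero]
    | succ k ih =>
      refine Nat.le_of_mul_le_mul_left ?_ k.succ_pos
      calc (k + 1) * indepCount (CLgraph d m) (k + 1)
          = (n - k * (d + 1)) * indepCount (CLgraph d m) k := hCL k
        _ ≤ (n - k * (d + 1)) * indepCount G k := Nat.mul_le_mul_left _ ih
        _ ≤ (k + 1) * indepCount G (k + 1) := hG k
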